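/- Let I ⊆ ℝ be an interval and u : I → ℝ twice differentiable with u(r) > 0 and u''(r) = (3/4)(u(r)^{−1/3} − u(r)) for all r ∈ I. Then the function r ↦ 3u(r)² + 4u'(r)² − 9u(r)^{2/3} is constant on I. -/
import Mathlib


/-- Along a positive twice differentiable solution of `u'' = (3/4)(u^{-1/3} - u)` on an
interval `I`, the quantity `3u² + 4(u')² - 9u^{2/3}` is constant. -/
theorem stmt_5 (I : Set ℝ) (hI : I.OrdConnected)
    (u u' : ℝ → ℝ)
    (hu : ∀ r ∈ I, HasDerivAt u (u' r) r)
    (hu' : ∀ r ∈ I,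
      HasDerivAt u' ((3 / 4) * ((u r) ^ (-(1 : ℝ) / 3) - u r)) r)
    (hpos : ∀ r ∈ I, 0 < u r) :
    ∀ r ∈ I, ∀ s ∈ I,
      3 * (u r) ^ 2 + 4 * (u' r) ^ 2 - 9 * (u r) ^ ((2 : ℝ) / 3)
        = 3 * (u s) ^ 2 + 4 * (u' s) ^ 2 - 9 * (u s) ^ ((2 : ℝ) / 3) := by
  set E : ℝ → ℝ := fun r => 3 * (u r) ^ 2 + 4 * (u' r) ^ 2 - 9 * (u r) ^ ((2 : ℝ) / 3)
    with hE
  have hconv : Convex ℝ I := convex_iff_ordConnected.mpr hI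
  have hderiv : ∀ r ∈ I, HasDerivAt E 0 r := by
    intro r hr
    have h1 := hu r hr
    have h2 := hu' r hr
    have hrpow : HasDerivAt (fun x => (u x) ^ ((2 : ℝ) / 3))
        (u' r * ((2 : ℝ) / 3) * (u r) ^ ((2 : ℝ) / 3 - 1)) r :=
      h1.rpow_const (Or.inl (hpos r hr).ne')
    have hD : HasDerivAt E
        (3 * (2 * u r * u' r) + 4 * (2 * u' r * ((3 / 4) * ((u r) ^ (-(1 : ℝ) / 3) - u r)))
          - 9 * (u' r * ((2 : ℝ) / 3) * (u r) ^ ((2 : ℝ) / 3 - 1)) ) r := by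
      have ha : HasDerivAt (fun x => 3 * (u x) ^ 2) (3 * (2 * u r * u' r)) r := by
        have := (h1.pow 2)
        simpa [mul_comm, mul_assoc, mul_left_comm] using this.const_mul 3
      have hb : HasDerivAt (fun x => 4 * (u' x) ^ 2)
          (4 * (2 * u' r * ((3 / 4) * ((u r) ^ (-(1 : ℝ) / 3) - u r)))) r := by
        have := (h2.pow 2)
        simpa [mul_comm, mul_assoc, mul_left_comm] using this.const_mul 4
      have hc : HasDerivAt (fun x => 9 * (u x) ^ ((2 : ℝ) / 3))
          (9 * (u' r * ((2 : ℝ) / 3) * (u r) ^ ((2 : ℝ) / 3 - 1))) r := hrpow.const_mul 9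
      exact (ha.add hb).sub hc
    have hexp : (u r) ^ ((2 : ℝ) / 3 - 1) = (u r) ^ (-(1 : ℝ) / 3) := by norm_num
    rw [hexp] at hD
    convert hD using 1
    ring
  intro r hr s hs
  have key : ‖E r - E s‖ ≤ 0 * ‖r - s‖ := by
    apply hconv.norm_image_sub_le_of_norm_hasDerivWithin_le
      (fun x hx => (hderiv x hx).hasDerivWithinAt) (fun x _ => by simp) hs hr
  have : E r = E s := by
    have := key
    simp only [zero_mul] at this
    have := norm_le_zero_iff.mp this
    linarith [sub_eq_zero.mp this]
  simpa [hE] using this
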